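/- The sequence of second derivatives (φₙ″) converges uniformly on [0, ε*]; consequently the uniform limit φ of (φₙ) is twice continuously differentiable on [0, ε*] and φ″ is the uniform limit of (φₙ″). -/

import Mathlib

open Set Filter intervalIntegral


/-- Geometric bound on successive differences gives a uniform limit. -/
lemma aux_unif_of_geom {s : Set ℝ} {u : ℕ → ℝ → ℝ} {B q : ℝ} (hq0 : 0 ≤ q) (hq1 : q < 1)
    (h : ∀ n, ∀ x ∈ s, |u (n + 1) x - u n x| ≤ B * q ^ n) :
    ∃ g : ℝ → ℝ, TendstoUniformlyOn u g atTop s ∧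
      ∀ n, ∀ x ∈ s, dist (u n x) (g x) ≤ B * q ^ n / (1 - q) := by
  have hdist : ∀ x ∈ s, ∀ n, dist (u n x) (u (n + 1) x) ≤ B * q ^ n := by
    intro x hx n
    rw [Real.dist_eq, abs_sub_comm]
    exact h n x hx
  have hcauchy : ∀ x ∈ s, CauchySeq fun n => u n x := fun x hx =>
    cauchySeq_of_le_geometric q B hq1 (hdist x hx)
  refine ⟨fun x => limUnder atTop fun n => u n x, ?_, ?_⟩
  · have hb : ∀ n, ∀ x ∈ s,
        dist (u n x) (limUnder atTop fun n => u n x) ≤ B * q ^ n / (1 - q) := by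
      intro n x hx
      exact dist_le_of_le_geometric_of_tendsto q B hq1 (hdist x hx)
        (hcauchy x hx).tendsto_limUnder n
    rw [Metric.tendstoUniformlyOn_iff]
    intro ε hε
    have hlim : Tendsto (fun n => B * q ^ n / (1 - q)) atTop (nhds 0) := by
      have := tendsto_pow_atTop_nhds_zero_of_lt_one hq0 hq1
      have := (this.const_mul B).div_const (1 - q)
      simpa using this
    have : ∀ᶠ n in atTop, B * q ^ n / (1 - q) < ε := by
      filter_upwards [hlim.eventually (gt_mem_nhds hε)] with n hn using hn
    filter_upwards [this] with n hn x hx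
    rw [dist_comm]
    exact lt_of_le_of_lt (hb n x hx) hn
  · intro n x hx
    exact dist_le_of_le_geometric_of_tendsto q B hq1 (hdist x hx)
      (hcauchy x hx).tendsto_limUnder n

/-- If `u n` has derivative `du n` within `[0, εs]`, `u n → g` and `du n → dg` uniformly,
then `g` has derivative `dg` within `[0, εs]`. -/
lemma aux_limit_hasDerivWithinAt {εs : ℝ} (hεs : 0 < εs) {u du : ℕ → ℝ → ℝ} {g dg : ℝ → ℝ}
    (hu : ∀ n, ContinuousOn (u n) (Icc 0 εs))
    (hdu : ∀ n, ContinuousOn (du n) (Icc 0 εs))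
    (hderiv : ∀ n, ∀ x ∈ Icc 0 εs, HasDerivWithinAt (u n) (du n x) (Icc 0 εs) x)
    (hg : TendstoUniformlyOn u g atTop (Icc 0 εs))
    (hdg : TendstoUniformlyOn du dg atTop (Icc 0 εs)) :
    ∀ x ∈ Icc 0 εs, HasDerivWithinAt g (dg x) (Icc 0 εs) x := by
  have hdgc : ContinuousOn dg (Icc 0 εs) :=
    hdg.continuousOn (Eventually.of_forall hdu).frequently
  -- continuous extension of dg to all of ℝ
  set dgE : ℝ → ℝ := IccExtend hεs.le ((Icc 0 εs).restrict dg) with hdgE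
  have hdgEc : Continuous dgE :=
    (continuousOn_iff_continuous_restrict.mp hdgc).Icc_extend'
  have hagree : ∀ y ∈ Icc 0 εs, dgE y = dg y := fun y hy => IccExtend_of_mem _ _ hy
  -- Step 1 : FTC for each n
  have hftc : ∀ n, ∀ y ∈ Icc 0 εs, ∫ t in (0:ℝ)..y, du n t = u n y - u n 0 := by
    intro n y hy
    refine integral_eq_sub_of_hasDeriv_right_of_le hy.1 ((hu n).mono ?_) ?_ ?_
    · exact Icc_subset_Icc le_rfl hy.2
    · intro t ht
      have htI : t ∈ Icc 0 εs := ⟨ht.1.le, ht.2.le.trans hy.2⟩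
      have : HasDerivAt (u n) (du n t) t :=
        (hderiv n t htI).hasDerivAt (Icc_mem_nhds ht.1 (lt_of_lt_of_le ht.2 hy.2))
      exact this.hasDerivWithinAt
    · exact ((hdu n).mono (Icc_subset_Icc le_rfl hy.2)).intervalIntegrable_of_Icc hy.1
  have hdgint : ∀ y ∈ Icc 0 εs, IntervalIntegrable dg MeasureTheory.volume 0 y := by
    intro y hy
    exact (hdgc.mono (Icc_subset_Icc le_rfl hy.2)).intervalIntegrable_of_Icc hy.1
  -- Step 2 : integrals converge
  have hint : ∀ y ∈ Icc 0 εs,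
      Tendsto (fun n => ∫ t in (0:ℝ)..y, du n t) atTop (nhds (∫ t in (0:ℝ)..y, dg t)) := by
    intro y hy
    rw [Metric.tendsto_atTop]
    intro ε hε
    have hε' : 0 < ε / (εs + 1) := by positivity
    have := (Metric.tendstoUniformlyOn_iff.mp hdg) (ε / (εs + 1)) hε'
    rw [eventually_atTop] at this
    obtain ⟨N, hN⟩ := this
    refine ⟨N, fun n hn => ?_⟩
    have hun : IntervalIntegrable (du n) MeasureTheory.volume 0 y :=
      ((hdu n).mono (Icc_subset_Icc le_rfl hy.2)).intervalIntegrable_of_Icc hy.1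
    rw [Real.dist_eq, ← integral_sub hun (hdgint y hy)]
    have hb : ∀ t ∈ Set.uIoc (0:ℝ) y, ‖du n t - dg t‖ ≤ ε / (εs + 1) := by
      intro t ht
      rw [Set.uIoc_of_le hy.1] at ht
      have htI : t ∈ Icc 0 εs := ⟨ht.1.le, ht.2.trans hy.2⟩
      have := hN n hn t htI
      rw [dist_comm, Real.dist_eq] at this
      exact this.le
    calc |∫ t in (0:ℝ)..y, du n t - dg t| ≤ ε / (εs + 1) * |y - 0| :=
          norm_integral_le_of_norm_le_const hb
      _ ≤ ε / (εs + 1) * εs := by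
          apply mul_le_mul_of_nonneg_left _ hε'.le
          rw [sub_zero, abs_of_nonneg hy.1]
          exact hy.2
      _ < ε := by
          have h1 : ε / (εs + 1) * (εs + 1) = ε := by field_simp
          nlinarith [hε'.le]
  -- Step 3 : the limit satisfies the integral identity
  have hgid : ∀ y ∈ Icc 0 εs, g y = g 0 + ∫ t in (0:ℝ)..y, dg t := by
    intro y hy
    have h0 : (0:ℝ) ∈ Icc 0 εs := ⟨le_rfl, hεs.le⟩
    have t1 : Tendsto (fun n => u n y - u n 0) atTop (nhds (g y - g 0)) :=
      (hg.tendsto_at hy).sub (hg.tendsto_at h0)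
    have t2 : Tendsto (fun n => u n y - u n 0) atTop (nhds (∫ t in (0:ℝ)..y, dg t)) := by
      have := hint y hy
      refine this.congr fun n => hftc n y hy
    have := tendsto_nhds_unique t1 t2
    linarith [this]
  -- Step 4 : differentiate
  intro x hx
  have hG : ∀ y : ℝ, HasDerivAt (fun z => g 0 + ∫ t in (0:ℝ)..z, dgE t) (dgE y) y := by
    intro y
    exact ((hdgEc.integral_hasStrictDerivAt 0 y).hasDerivAt).const_add (g 0)
  have hGW : HasDerivWithinAt (fun z => g 0 + ∫ t in (0:ℝ)..z, dgE t) (dgE x) (Icc 0 εs) x :=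
    (hG x).hasDerivWithinAt
  have hcongr : ∀ z ∈ Icc 0 εs, g z = g 0 + ∫ t in (0:ℝ)..z, dgE t := by
    intro z hz
    rw [hgid z hz]
    congr 1
    apply integral_congr
    intro t ht
    rw [Set.uIcc_of_le hz.1] at ht
    exact (hagree t ⟨ht.1, ht.2.trans hz.2⟩).symm
  have := hGW.congr hcongr (hcongr x hx)
  rwa [hagree x hx] at this


set_option maxHeartbeats 1000000 in
/-- Under the standing hypotheses, the second derivatives `φₙ″` of the
rescaled iterates `φₙ(x) = f⁽ⁿ⁾(x)/aⁿ` converge uniformly on `[0,ε*]`; consequently the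
uniform limit `φ` of `(φₙ)` is twice continuously differentiable on `[0,ε*]` and `φ″` is the
uniform limit of `(φₙ″)`. -/
theorem rescaled_iterates_second_deriv_converge (a δ C εs : ℝ) (f : ℝ → ℝ)
    (ha0 : 0 < a) (ha1 : a < 1) (hδ : 0 < δ) (hC : 0 < C) (hεs : 0 < εs)
    (hsmall : a * (1 + δ) ^ 2 < 1)
    (hf : ContDiffOn ℝ 2 f (Set.Icc 0 εs))
    (hf0 : f 0 = 0)
    (hf'0 : derivWithin f (Set.Icc 0 εs) 0 = a)
    (hf'' : ∀ x ∈ Set.Icc 0 εs,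
      |derivWithin (derivWithin f (Set.Icc 0 εs)) (Set.Icc 0 εs) x| ≤ C)
    (hf1 : ∀ x ∈ Set.Icc 0 εs, 0 ≤ f x ∧ f x ≤ (1 + δ) * a * x)
    (hf2 : ∀ x ∈ Set.Icc 0 εs, |f x - a * x| ≤ C * x ^ 2) :
    ∃ φ ψ : ℝ → ℝ,
      TendstoUniformlyOn (fun n x => f^[n] x / a ^ n) φ Filter.atTop (Set.Icc 0 εs) ∧
      TendstoUniformlyOn
        (fun n x => derivWithin (derivWithin (fun y => f^[n] y / a ^ n) (Set.Icc 0 εs))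
          (Set.Icc 0 εs) x) ψ Filter.atTop (Set.Icc 0 εs) ∧
      ContDiffOn ℝ 2 φ (Set.Icc 0 εs) ∧
      (∀ x ∈ Set.Icc 0 εs,
        derivWithin (derivWithin φ (Set.Icc 0 εs)) (Set.Icc 0 εs) x = ψ x) := by
  classical
  set I : Set ℝ := Set.Icc 0 εs with hIdef
  have hI : UniqueDiffOn ℝ I := uniqueDiffOn_Icc hεs
  have h0I : (0:ℝ) ∈ I := ⟨le_rfl, hεs.le⟩
  set r : ℝ := (1 + δ) * a with hrdef
  have hr0 : 0 < r := by positivity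
  have hr1 : r < 1 := by nlinarith
  set sg : ℝ := a * (1 + δ) ^ 2 with hsgdef
  have hsg0 : 0 < sg := by positivity
  have hsg1 : sg < 1 := hsmall
  have hr2 : r ^ 2 = a * sg := by rw [hrdef, hsgdef]; ring
  -- f maps I to itself
  have hmapsf : Set.MapsTo f I I := by
    intro x hx
    obtain ⟨h1, h2⟩ := hf1 x hx
    refine ⟨h1, ?_⟩
    have : (1 + δ) * a * x ≤ x := by nlinarith [hx.1, hx.2]
    exact h2.trans (this.trans hx.2)
  have hiter : ∀ n : ℕ, ∀ x ∈ I, f^[n] x ∈ I ∧ f^[n] x ≤ r ^ n * x := by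
    intro n
    induction n with
    | zero => intro x hx; simpa using hx
    | succ n ih =>
      intro x hx
      obtain ⟨h1, h2⟩ := ih x hx
      rw [Function.iterate_succ_apply']
      constructor
      · exact hmapsf h1
      · have h3 : f (f^[n] x) ≤ r * f^[n] x := (hf1 _ h1).2
        have h4 : r * f^[n] x ≤ r * (r ^ n * x) := by
          exact mul_le_mul_of_nonneg_left h2 hr0.le
        calc f (f^[n] x) ≤ r * (r ^ n * x) := h3.trans h4
          _ = r ^ (n+1) * x := by ring
  have hmaps : ∀ n : ℕ, Set.MapsTo (f^[n]) I I := fun n x hx => (hiter n x hx).1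
  -- derivatives of f
  set f' : ℝ → ℝ := derivWithin f I with hf'def
  set f'' : ℝ → ℝ := derivWithin f' I with hf''def
  have hfd : DifferentiableOn ℝ f I := hf.differentiableOn two_ne_zero
  have hf'c : ContDiffOn ℝ 1 f' I := hf.derivWithin hI (by norm_num)
  have hf'd : DifferentiableOn ℝ f' I := hf'c.differentiableOn one_ne_zero
  have hf''cd : ContDiffOn ℝ 0 (derivWithin f' I) I := hf'c.derivWithin hI (by norm_num)
  have hf''cont : ContinuousOn f'' I := hf''cd.continuousOn
  have hhf : ∀ y ∈ I, HasDerivWithinAt f (f' y) I y := fun y hy => (hfd y hy).hasDerivWithinAt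
  have hhf' : ∀ y ∈ I, HasDerivWithinAt f' (f'' y) I y := fun y hy => (hf'd y hy).hasDerivWithinAt
  -- |f' y - a| ≤ C y on I
  have hf'bound : ∀ y ∈ I, |f' y - a| ≤ C * y := by
    intro y hy
    have := (convex_Icc (0:ℝ) εs).norm_image_sub_le_of_norm_derivWithin_le hf'd
      (fun z hz => by rw [Real.norm_eq_abs]; exact hf'' z hz) h0I hy
    rw [hf'0, Real.norm_eq_abs, Real.norm_eq_abs, sub_zero, abs_of_nonneg hy.1] at this
    exact this
  -- first and second derivatives of the iterates
  set F1 : ℕ → ℝ → ℝ := fun n x => ∏ k ∈ Finset.range n, f' (f^[k] x) with hF1def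
  set F2 : ℕ → ℝ → ℝ := fun n => Nat.rec (fun _ => (0:ℝ))
    (fun m ih x => ih x * f' (f^[m] x) + f'' (f^[m] x) * F1 m x * F1 m x) n with hF2def
  have hF10 : ∀ x : ℝ, F1 0 x = 1 := by intro x; simp [hF1def]
  have hF1s : ∀ (n : ℕ) (x : ℝ), F1 (n+1) x = F1 n x * f' (f^[n] x) := by
    intro n x; simp [hF1def, Finset.prod_range_succ]
  have hF20 : ∀ x : ℝ, F2 0 x = 0 := fun _ => rfl
  have hF2s : ∀ (n : ℕ) (x : ℝ),
      F2 (n+1) x = F2 n x * f' (f^[n] x) + f'' (f^[n] x) * F1 n x * F1 n x := fun _ _ => rfl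
  have hD : ∀ n : ℕ, ∀ x ∈ I,
      HasDerivWithinAt (f^[n]) (F1 n x) I x ∧ HasDerivWithinAt (F1 n) (F2 n x) I x := by
    intro n
    induction n with
    | zero =>
      intro x hx
      constructor
      · rw [Function.iterate_zero]
        simpa [hF10 x] using (hasDerivWithinAt_id x I)
      · have : (F1 0) = fun _ : ℝ => (1:ℝ) := by funext y; exact hF10 y
        rw [this, hF20]
        exact hasDerivWithinAt_const x I 1
    | succ n ih =>
      intro x hx
      obtain ⟨h1, h2⟩ := ih x hx
      have hxn : f^[n] x ∈ I := (hiter n x hx).1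
      have hc1 : HasDerivWithinAt (f ∘ f^[n]) (f' (f^[n] x) * F1 n x) I x :=
        (hhf _ hxn).comp x h1 (hmaps n)
      have hc2 : HasDerivWithinAt (f' ∘ f^[n]) (f'' (f^[n] x) * F1 n x) I x :=
        (hhf' _ hxn).comp x h1 (hmaps n)
      constructor
      · rw [Function.iterate_succ', hF1s n x]
        rw [mul_comm]
        exact hc1
      · have heq : (F1 (n+1)) = fun y => F1 n y * f' (f^[n] y) := by
          funext y; exact hF1s n y
        rw [heq, hF2s]
        have := h2.mul hc2
        convert this using 1
        · rfl
        · rfl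
        · rfl
        simp only [Function.comp_apply]
        ring
  -- constants
  set c : ℝ := C * εs / a with hcdef
  have hc0 : 0 < c := by positivity
  set K : ℝ := Real.exp (c / (1 - r)) with hKdef
  have hK1 : 1 ≤ K := Real.one_le_exp (div_nonneg hc0.le (by linarith))
  have hK0 : 0 < K := lt_of_lt_of_le one_pos hK1
  set Q : ℕ → ℝ := fun n => ∏ k ∈ Finset.range n, (1 + c * r ^ k) with hQdef
  have hQ1 : ∀ n, 1 ≤ Q n := by
    intro n
    simp only [hQdef]
    calc (1:ℝ) = ∏ _k ∈ Finset.range n, (1:ℝ) := by simp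
      _ ≤ ∏ k ∈ Finset.range n, (1 + c * r ^ k) := by
          apply Finset.prod_le_prod
          · intro k _; norm_num
          · intro k _; nlinarith [pow_pos hr0 k]
  have hQ0 : ∀ n, 0 < Q n := fun n => lt_of_lt_of_le one_pos (hQ1 n)
  have hQK : ∀ n, Q n ≤ K := by
    intro n
    have h1 : Q n ≤ ∏ k ∈ Finset.range n, Real.exp (c * r ^ k) := by
      simp only [hQdef]
      apply Finset.prod_le_prod
      · intro k _; positivity
      · intro k _
        have := Real.add_one_le_exp (c * r ^ k)
        linarith
    have h2 : ∏ k ∈ Finset.range n, Real.exp (c * r ^ k)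
        = Real.exp (∑ k ∈ Finset.range n, c * r ^ k) := by
      rw [Real.exp_sum]
    have h3 : ∑ k ∈ Finset.range n, c * r ^ k ≤ c / (1 - r) := by
      rw [← Finset.mul_sum]
      have hsum : ∑ k ∈ Finset.range n, r ^ k ≤ (1 - r)⁻¹ := by
        have := Summable.sum_le_tsum (Finset.range n) (fun i _ => (pow_pos hr0 i).le)
          (summable_geometric_of_lt_one hr0.le hr1)
        rwa [tsum_geometric_of_lt_one hr0.le hr1] at this
      calc c * ∑ k ∈ Finset.range n, r ^ k ≤ c * (1 - r)⁻¹ :=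
            mul_le_mul_of_nonneg_left hsum hc0.le
        _ = c / (1 - r) := by rw [div_eq_mul_inv]
    calc Q n ≤ Real.exp (∑ k ∈ Finset.range n, c * r ^ k) := h1.trans_eq h2
      _ ≤ K := Real.exp_le_exp.mpr h3
  have hQs : ∀ n, Q (n+1) = Q n * (1 + c * r ^ n) := by
    intro n; simp [hQdef, Finset.prod_range_succ]
  -- bound on f' along the orbit
  have hxnb : ∀ (n : ℕ), ∀ x ∈ I, f^[n] x ≤ r ^ n * εs := by
    intro n x hx
    calc f^[n] x ≤ r ^ n * x := (hiter n x hx).2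
      _ ≤ r ^ n * εs := mul_le_mul_of_nonneg_left hx.2 (pow_pos hr0 n).le
  have hf'orb : ∀ (n : ℕ), ∀ x ∈ I, |f' (f^[n] x)| ≤ a * (1 + c * r ^ n) := by
    intro n x hx
    have hxn : f^[n] x ∈ I := (hiter n x hx).1
    have h1 : |f' (f^[n] x)| ≤ a + C * f^[n] x := by
      have := hf'bound _ hxn
      calc |f' (f^[n] x)| = |a + (f' (f^[n] x) - a)| := by ring_nf
        _ ≤ |a| + |f' (f^[n] x) - a| := abs_add_le _ _
        _ ≤ a + C * f^[n] x := by rw [abs_of_pos ha0]; linarith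
    have h2 : C * f^[n] x ≤ C * (r ^ n * εs) :=
      mul_le_mul_of_nonneg_left (hxnb n x hx) hC.le
    have h3 : a * (1 + c * r ^ n) = a + C * (r ^ n * εs) := by
      rw [hcdef]; field_simp
    linarith
  have hf'orbdiff : ∀ (n : ℕ), ∀ x ∈ I, |f' (f^[n] x) - a| ≤ a * c * r ^ n := by
    intro n x hx
    have hxn : f^[n] x ∈ I := (hiter n x hx).1
    have h1 := hf'bound _ hxn
    have h2 : C * f^[n] x ≤ C * (r ^ n * εs) :=
      mul_le_mul_of_nonneg_left (hxnb n x hx) hC.le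
    have h3 : a * c * r ^ n = C * (r ^ n * εs) := by rw [hcdef]; field_simp
    linarith
  -- bound on F1
  have hF1b : ∀ (n : ℕ), ∀ x ∈ I, |F1 n x| ≤ a ^ n * Q n := by
    intro n x hx
    have h1 : |F1 n x| ≤ ∏ k ∈ Finset.range n, (a * (1 + c * r ^ k)) := by
      rw [hF1def]
      simp only
      rw [Finset.abs_prod]
      apply Finset.prod_le_prod
      · intro k _; exact abs_nonneg _
      · intro k _; exact hf'orb k x hx
    calc |F1 n x| ≤ ∏ k ∈ Finset.range n, (a * (1 + c * r ^ k)) := h1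
      _ = a ^ n * Q n := by
          rw [Finset.prod_mul_distrib, Finset.prod_const, Finset.card_range]
  have hF1K : ∀ (n : ℕ), ∀ x ∈ I, |F1 n x| ≤ a ^ n * K := by
    intro n x hx
    calc |F1 n x| ≤ a ^ n * Q n := hF1b n x hx
      _ ≤ a ^ n * K := mul_le_mul_of_nonneg_left (hQK n) (pow_pos ha0 n).le
  -- bound on F2
  set E : ℝ := C * K ^ 2 / a with hEdef
  have hE0 : 0 < E := by positivity
  have hF2b : ∀ (n : ℕ), ∀ x ∈ I, |F2 n x| ≤ E * n * a ^ n * Q n := by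
    intro n
    induction n with
    | zero => intro x hx; simp [hF20]
    | succ n ih =>
      intro x hx
      have hxn : f^[n] x ∈ I := (hiter n x hx).1
      have h1 : |F2 (n+1) x| ≤ |F2 n x| * |f' (f^[n] x)| + C * |F1 n x| * |F1 n x| := by
        rw [hF2s]
        calc |F2 n x * f' (f^[n] x) + f'' (f^[n] x) * F1 n x * F1 n x|
            ≤ |F2 n x * f' (f^[n] x)| + |f'' (f^[n] x) * F1 n x * F1 n x| := abs_add_le _ _
          _ ≤ |F2 n x| * |f' (f^[n] x)| + C * |F1 n x| * |F1 n x| := by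
              rw [abs_mul, abs_mul, abs_mul]
              have h := mul_le_mul_of_nonneg_right (hf'' _ hxn)
                (mul_nonneg (abs_nonneg (F1 n x)) (abs_nonneg (F1 n x)))
              nlinarith [h]
      have h2 : |F2 n x| * |f' (f^[n] x)| ≤ (E * n * a ^ n * Q n) * (a * (1 + c * r ^ n)) := by
        apply mul_le_mul (ih x hx) (hf'orb n x hx) (abs_nonneg _)
        positivity
      have h3 : C * |F1 n x| * |F1 n x| ≤ C * (a ^ n * K) * (a ^ n * K) := by
        have hmm := mul_le_mul (hF1K n x hx) (hF1K n x hx) (abs_nonneg _)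
          (by positivity : (0:ℝ) ≤ a ^ n * K)
        calc C * |F1 n x| * |F1 n x| = C * (|F1 n x| * |F1 n x|) := by ring
          _ ≤ C * ((a ^ n * K) * (a ^ n * K)) := mul_le_mul_of_nonneg_left hmm hC.le
          _ = C * (a ^ n * K) * (a ^ n * K) := by ring
      have h4 : C * (a ^ n * K) * (a ^ n * K) ≤ E * a ^ (n+1) * Q (n+1) := by
        have e1 : C * (a ^ n * K) * (a ^ n * K) = E * a ^ (n+1) * a ^ n := by
          rw [hEdef]; field_simp; ring
        rw [e1]
        have e2 : a ^ n ≤ 1 := pow_le_one₀ ha0.le ha1.le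
        have e3 : (1:ℝ) ≤ Q (n+1) := hQ1 (n+1)
        have e4 : (0:ℝ) < E * a ^ (n+1) := by positivity
        nlinarith
      have h5 : (E * n * a ^ n * Q n) * (a * (1 + c * r ^ n)) = E * n * a ^ (n+1) * Q (n+1) := by
        rw [hQs]; ring
      calc |F2 (n+1) x| ≤ |F2 n x| * |f' (f^[n] x)| + C * |F1 n x| * |F1 n x| := h1
        _ ≤ E * n * a ^ (n+1) * Q (n+1) + E * a ^ (n+1) * Q (n+1) := by
            rw [← h5]; linarith
        _ = E * ((n:ℝ)+1) * a ^ (n+1) * Q (n+1) := by ring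
        _ = E * ((n+1 : ℕ):ℝ) * a ^ (n+1) * Q (n+1) := by push_cast; ring
  have hF2K : ∀ (n : ℕ), ∀ x ∈ I, |F2 n x| ≤ E * K * n * a ^ n := by
    intro n x hx
    calc |F2 n x| ≤ E * n * a ^ n * Q n := hF2b n x hx
      _ ≤ E * n * a ^ n * K := by
          apply mul_le_mul_of_nonneg_left (hQK n); positivity
      _ = E * K * n * a ^ n := by ring
  have han : ∀ n : ℕ, (0:ℝ) < a ^ n := fun n => pow_pos ha0 n
  -- difference bound for the functions
  have hd0 : ∀ (n : ℕ), ∀ x ∈ I,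
      |f^[n+1] x / a ^ (n+1) - f^[n] x / a ^ n| ≤ (C * εs ^ 2 / a) * sg ^ n := by
    intro n x hx
    have hxn : f^[n] x ∈ I := (hiter n x hx).1
    have key : f^[n+1] x / a ^ (n+1) - f^[n] x / a ^ n
        = (f (f^[n] x) - a * f^[n] x) / a ^ (n+1) := by
      rw [Function.iterate_succ_apply']
      field_simp
      ring
    rw [key, abs_div, abs_of_pos (han (n+1))]
    have h1 : |f (f^[n] x) - a * f^[n] x| ≤ C * (r ^ n * εs) ^ 2 := by
      have h2 := hf2 _ hxn
      have h3 : (f^[n] x) ^ 2 ≤ (r ^ n * εs) ^ 2 := by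
        have := hxnb n x hx
        nlinarith [hxn.1]
      nlinarith
    have h4 : C * (r ^ n * εs) ^ 2 / a ^ (n+1) = (C * εs ^ 2 / a) * sg ^ n := by
      have e1 : (r ^ n) ^ 2 = a ^ n * sg ^ n := by
        rw [← pow_mul, mul_comm n 2, pow_mul, hr2, mul_pow]
      rw [mul_pow, e1]
      field_simp
      ring
    calc |f (f^[n] x) - a * f^[n] x| / a ^ (n+1) ≤ C * (r ^ n * εs) ^ 2 / a ^ (n+1) := by
          gcongr
      _ = (C * εs ^ 2 / a) * sg ^ n := h4
  -- difference bound for first derivatives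
  have hd1 : ∀ (n : ℕ), ∀ x ∈ I,
      |F1 (n+1) x / a ^ (n+1) - F1 n x / a ^ n| ≤ (K * c) * r ^ n := by
    intro n x hx
    have key : F1 (n+1) x / a ^ (n+1) - F1 n x / a ^ n
        = F1 n x * (f' (f^[n] x) - a) / a ^ (n+1) := by
      rw [hF1s]
      field_simp
      ring
    rw [key, abs_div, abs_of_pos (han (n+1)), abs_mul]
    have h1 : |F1 n x| * |f' (f^[n] x) - a| ≤ (a ^ n * K) * (a * c * r ^ n) :=
      mul_le_mul (hF1K n x hx) (hf'orbdiff n x hx) (abs_nonneg _) (by positivity)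
    have h2 : (a ^ n * K) * (a * c * r ^ n) / a ^ (n+1) = (K * c) * r ^ n := by
      field_simp
      ring
    calc |F1 n x| * |f' (f^[n] x) - a| / a ^ (n+1)
        ≤ (a ^ n * K) * (a * c * r ^ n) / a ^ (n+1) := by
          gcongr
      _ = (K * c) * r ^ n := h2
  -- auxiliary : n * t^n ≤ (1-t)⁻¹ for 0 ≤ t < 1
  have hnt : ∀ (t : ℝ), 0 ≤ t → t < 1 → ∀ n : ℕ, (n:ℝ) * t ^ n ≤ (1 - t)⁻¹ := by
    intro t ht0 ht1 n
    have h1 : (n:ℝ) * t ^ n ≤ ∑ k ∈ Finset.range n, t ^ k := by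
      have : ∀ k ∈ Finset.range n, t ^ n ≤ t ^ k := fun k hk =>
        pow_le_pow_of_le_one ht0 ht1.le (Finset.mem_range.mp hk).le
      calc (n:ℝ) * t ^ n = ∑ _k ∈ Finset.range n, t ^ n := by
            rw [Finset.sum_const, Finset.card_range, nsmul_eq_mul]
        _ ≤ ∑ k ∈ Finset.range n, t ^ k := Finset.sum_le_sum this
    have h2 : ∑ k ∈ Finset.range n, t ^ k ≤ (1 - t)⁻¹ := by
      have := Summable.sum_le_tsum (Finset.range n) (fun i _ => pow_nonneg ht0 i)
        (summable_geometric_of_lt_one ht0 ht1)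
      rwa [tsum_geometric_of_lt_one ht0 ht1] at this
    linarith
  -- difference bound for second derivatives
  set t : ℝ := Real.sqrt r with htdef
  have ht0 : 0 < t := Real.sqrt_pos.mpr hr0
  have ht1 : t < 1 := by
    rw [htdef]
    rw [show (1:ℝ) = Real.sqrt 1 from (Real.sqrt_one).symm]
    exact Real.sqrt_lt_sqrt hr0.le hr1
  have htr : t ^ 2 = r := Real.sq_sqrt hr0.le
  set q : ℝ := max a t with hqdef
  have hq0 : 0 < q := lt_max_of_lt_left ha0
  have hq1 : q < 1 := max_lt ha1 ht1
  have haq : a ≤ q := le_max_left a t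
  have htq : t ≤ q := le_max_right a t
  set B : ℝ := E * K * c * (1 - t)⁻¹ + E with hBdef
  have hd2 : ∀ (n : ℕ), ∀ x ∈ I,
      |F2 (n+1) x / a ^ (n+1) - F2 n x / a ^ n| ≤ B * q ^ n := by
    intro n x hx
    have key : F2 (n+1) x / a ^ (n+1) - F2 n x / a ^ n
        = F2 n x * (f' (f^[n] x) - a) / a ^ (n+1)
          + f'' (f^[n] x) * F1 n x * F1 n x / a ^ (n+1) := by
      rw [hF2s]
      field_simp
      ring
    rw [key]
    have hP1 : |F2 n x * (f' (f^[n] x) - a) / a ^ (n+1)| ≤ E * K * c * (1 - t)⁻¹ * t ^ n := by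
      rw [abs_div, abs_of_pos (han (n+1)), abs_mul]
      have h1 : |F2 n x| * |f' (f^[n] x) - a| ≤ (E * K * n * a ^ n) * (a * c * r ^ n) :=
        mul_le_mul (hF2K n x hx) (hf'orbdiff n x hx) (abs_nonneg _) (by positivity)
      have h2 : (E * K * n * a ^ n) * (a * c * r ^ n) / a ^ (n+1)
          = E * K * c * ((n:ℝ) * r ^ n) := by
        field_simp
        ring
      have h3 : (n:ℝ) * r ^ n ≤ (1 - t)⁻¹ * t ^ n := by
        have e1 : r ^ n = t ^ n * t ^ n := by
          rw [← htr, ← pow_mul, two_mul, pow_add]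
        have e2 : (n:ℝ) * t ^ n ≤ (1 - t)⁻¹ := hnt t ht0.le ht1 n
        calc (n:ℝ) * r ^ n = ((n:ℝ) * t ^ n) * t ^ n := by rw [e1]; ring
          _ ≤ (1 - t)⁻¹ * t ^ n :=
            mul_le_mul_of_nonneg_right e2 (pow_nonneg ht0.le n)
      calc |F2 n x| * |f' (f^[n] x) - a| / a ^ (n+1)
          ≤ (E * K * n * a ^ n) * (a * c * r ^ n) / a ^ (n+1) := by
            gcongr
        _ = E * K * c * ((n:ℝ) * r ^ n) := h2
        _ ≤ E * K * c * ((1 - t)⁻¹ * t ^ n) := by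
            apply mul_le_mul_of_nonneg_left h3 (by positivity)
        _ = E * K * c * (1 - t)⁻¹ * t ^ n := by ring
    have hP2 : |f'' (f^[n] x) * F1 n x * F1 n x / a ^ (n+1)| ≤ E * a ^ n := by
      rw [abs_div, abs_of_pos (han (n+1)), abs_mul, abs_mul]
      have hxn : f^[n] x ∈ I := (hiter n x hx).1
      have h1 : |f'' (f^[n] x)| * |F1 n x| * |F1 n x| ≤ C * (a ^ n * K) * (a ^ n * K) := by
        have hmm := mul_le_mul (hF1K n x hx) (hF1K n x hx) (abs_nonneg _)
          (by positivity : (0:ℝ) ≤ a ^ n * K)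
        have h2 := mul_le_mul (hf'' _ hxn) hmm
          (mul_nonneg (abs_nonneg _) (abs_nonneg _)) hC.le
        calc |f'' (f^[n] x)| * |F1 n x| * |F1 n x|
            = |f'' (f^[n] x)| * (|F1 n x| * |F1 n x|) := by ring
          _ ≤ C * ((a ^ n * K) * (a ^ n * K)) := h2
          _ = C * (a ^ n * K) * (a ^ n * K) := by ring
      have h3 : C * (a ^ n * K) * (a ^ n * K) / a ^ (n+1) = E * a ^ n := by
        rw [hEdef]
        field_simp
        ring
      calc |f'' (f^[n] x)| * |F1 n x| * |F1 n x| / a ^ (n+1)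
          ≤ C * (a ^ n * K) * (a ^ n * K) / a ^ (n+1) := by gcongr
        _ = E * a ^ n := h3
    have htn : t ^ n ≤ q ^ n := pow_le_pow_left₀ ht0.le htq n
    have hanq : a ^ n ≤ q ^ n := pow_le_pow_left₀ ha0.le haq n
    calc |F2 n x * (f' (f^[n] x) - a) / a ^ (n+1)
          + f'' (f^[n] x) * F1 n x * F1 n x / a ^ (n+1)|
        ≤ |F2 n x * (f' (f^[n] x) - a) / a ^ (n+1)|
          + |f'' (f^[n] x) * F1 n x * F1 n x / a ^ (n+1)| := abs_add_le _ _
      _ ≤ E * K * c * (1 - t)⁻¹ * t ^ n + E * a ^ n := add_le_add hP1 hP2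
      _ ≤ E * K * c * (1 - t)⁻¹ * q ^ n + E * q ^ n := by
          have : (0:ℝ) ≤ E * K * c * (1 - t)⁻¹ := by
            have : (0:ℝ) < (1 - t)⁻¹ := by
              apply inv_pos.mpr; linarith
            positivity
          have := mul_le_mul_of_nonneg_left htn this
          have := mul_le_mul_of_nonneg_left hanq hE0.le
          nlinarith [mul_le_mul_of_nonneg_left htn ‹(0:ℝ) ≤ E * K * c * (1 - t)⁻¹›]
      _ = B * q ^ n := by rw [hBdef]; ring
  -- continuity of everything
  have hfc : ContinuousOn f I := hf.continuousOn
  have hf'cont : ContinuousOn f' I := hf'c.continuousOn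
  have hitc : ∀ n : ℕ, ContinuousOn (f^[n]) I := by
    intro n
    induction n with
    | zero => simpa using continuousOn_id
    | succ n ih =>
      rw [Function.iterate_succ']
      exact hfc.comp ih (hmaps n)
  have hF1c : ∀ n : ℕ, ContinuousOn (F1 n) I := by
    intro n
    induction n with
    | zero =>
      have : (F1 0) = fun _ : ℝ => (1:ℝ) := by funext y; exact hF10 y
      rw [this]; exact continuousOn_const
    | succ n ih =>
      have heq : (F1 (n+1)) = fun y => F1 n y * f' (f^[n] y) := by
        funext y; exact hF1s n y
      rw [heq]
      exact ih.mul (hf'cont.comp (hitc n) (hmaps n))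
  have hF2c : ∀ n : ℕ, ContinuousOn (F2 n) I := by
    intro n
    induction n with
    | zero =>
      have : (F2 0) = fun _ : ℝ => (0:ℝ) := by funext y; exact hF20 y
      rw [this]; exact continuousOn_const
    | succ n ih =>
      have heq : (F2 (n+1)) = fun y =>
          F2 n y * f' (f^[n] y) + f'' (f^[n] y) * F1 n y * F1 n y := by
        funext y; exact hF2s n y
      rw [heq]
      exact (ih.mul (hf'cont.comp (hitc n) (hmaps n))).add
        (((hf''cont.comp (hitc n) (hmaps n)).mul (hF1c n)).mul (hF1c n))
  -- the three uniform limits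
  obtain ⟨φ, hφu, -⟩ := aux_unif_of_geom (u := fun n x => f^[n] x / a ^ n) hsg0.le hsg1 hd0
  obtain ⟨χ, hχu, -⟩ := aux_unif_of_geom (u := fun n x => F1 n x / a ^ n) hr0.le hr1 hd1
  obtain ⟨ψ, hψu, -⟩ := aux_unif_of_geom (u := fun n x => F2 n x / a ^ n) hq0.le hq1 hd2
  -- derivatives of the rescaled iterates
  have hDφ : ∀ n : ℕ, ∀ x ∈ I,
      HasDerivWithinAt (fun y => f^[n] y / a ^ n) (F1 n x / a ^ n) I x :=
    fun n x hx => ((hD n x hx).1).div_const (a ^ n)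
  have hDχ : ∀ n : ℕ, ∀ x ∈ I,
      HasDerivWithinAt (fun y => F1 n y / a ^ n) (F2 n x / a ^ n) I x :=
    fun n x hx => ((hD n x hx).2).div_const (a ^ n)
  -- derivatives of the limits
  have hgd : ∀ x ∈ I, HasDerivWithinAt φ (χ x) I x := by
    apply aux_limit_hasDerivWithinAt hεs (u := fun n x => f^[n] x / a ^ n)
      (du := fun n x => F1 n x / a ^ n)
    · exact fun n => (hitc n).div_const _
    · exact fun n => (hF1c n).div_const _
    · exact hDφ
    · exact hφu
    · exact hχu
  have hχd : ∀ x ∈ I, HasDerivWithinAt χ (ψ x) I x := by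
    apply aux_limit_hasDerivWithinAt hεs (u := fun n x => F1 n x / a ^ n)
      (du := fun n x => F2 n x / a ^ n)
    · exact fun n => (hF1c n).div_const _
    · exact fun n => (hF2c n).div_const _
    · exact hDχ
    · exact hχu
    · exact hψu
  have hψc : ContinuousOn ψ I :=
    hψu.continuousOn (Eventually.of_forall fun n => (hF2c n).div_const _).frequently
  have hφχ : Set.EqOn (derivWithin φ I) χ I :=
    fun x hx => (hgd x hx).derivWithin (hI x hx)
  have hχψ : Set.EqOn (derivWithin χ I) ψ I :=
    fun x hx => (hχd x hx).derivWithin (hI x hx)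
  refine ⟨φ, ψ, hφu, ?_, ?_, ?_⟩
  · -- second derivatives converge
    apply hψu.congr
    apply Eventually.of_forall
    intro n x hx
    have e1 : Set.EqOn (derivWithin (fun y => f^[n] y / a ^ n) I) (fun y => F1 n y / a ^ n) I :=
      fun y hy => (hDφ n y hy).derivWithin (hI y hy)
    have e2 : derivWithin (derivWithin (fun y => f^[n] y / a ^ n) I) I x
        = derivWithin (fun y => F1 n y / a ^ n) I x :=
      derivWithin_congr e1 (e1 hx)
    show F2 n x / a ^ n = derivWithin (derivWithin (fun y => f^[n] y / a ^ n) I) I x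
    exact ((hDχ n x hx).derivWithin (hI x hx)).symm.trans e2.symm
  · -- C² regularity
    have hχ1 : ContDiffOn ℝ 1 χ I := by
      rw [show (1 : WithTop ℕ∞) = 0 + 1 by norm_num, contDiffOn_succ_iff_derivWithin hI]
      refine ⟨fun x hx => (hχd x hx).differentiableWithinAt, ?_, ?_⟩
      · intro h; exact absurd h (by norm_num)
      · exact (contDiffOn_zero.mpr hψc).congr hχψ
    rw [show (2 : WithTop ℕ∞) = 1 + 1 by norm_num, contDiffOn_succ_iff_derivWithin hI]
    refine ⟨fun x hx => (hgd x hx).differentiableWithinAt, ?_, ?_⟩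
    · intro h; exact absurd h (by norm_num)
    · exact hχ1.congr hφχ
  · -- identify the second derivative
    intro x hx
    rw [derivWithin_congr hφχ (hφχ hx)]
    exact hχψ hx
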